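/- For all l ∈ [0, π_2/2], sleaf_2(l)² + cleaf_2(l)² + sleaf_2(l)²·cleaf_2(l)² = 1. -/

import Mathlib

open MeasureTheory Set intervalIntegral

noncomputable def lfn (t : ℝ) : ℝ := 1 / Real.sqrt (1 - t ^ 4)

lemma lfn_meas : Measurable lfn := by
  unfold lfn; fun_prop

lemma lfn_int01 : IntervalIntegrable lfn volume 0 1 := by
  have hg : IntervalIntegrable (fun x : ℝ => (1 - x) ^ (-(1/2) : ℝ)) volume 0 1 := by
    have := (intervalIntegral.intervalIntegrable_rpow' (a := 1) (b := 0)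
      (r := (-(1/2) : ℝ)) (by norm_num)).comp_sub_left 1
    norm_num at this ⊢
    exact this
  apply hg.mono_fun (lfn_meas.aestronglyMeasurable)
  · filter_upwards [ae_restrict_mem measurableSet_Ioc] with t ht
    rw [Set.uIoc_of_le (by norm_num : (0:ℝ) ≤ 1)] at ht
    obtain ⟨ht0, ht1⟩ := ht
    have h1 : (0:ℝ) ≤ 1 - t := by linarith
    rw [Real.norm_eq_abs, Real.norm_eq_abs]
    have hfn : 0 ≤ lfn t := by unfold lfn; positivity
    rw [abs_of_nonneg hfn, abs_of_nonneg (Real.rpow_nonneg h1 _)]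
    rcases eq_or_lt_of_le ht1 with h | h
    · subst h
      norm_num [lfn, Real.zero_rpow]
    · have h4 : 1 - t ≤ 1 - t ^ 4 := by
        nlinarith [mul_nonneg (mul_nonneg ht0.le h1) (by positivity : (0:ℝ) ≤ 1 + t + t^2)]
      have hpos : 0 < 1 - t := by linarith
      unfold lfn
      rw [Real.rpow_neg h1, ← Real.sqrt_eq_rpow, one_div]
      exact inv_anti₀ (Real.sqrt_pos.2 hpos) (Real.sqrt_le_sqrt h4)

noncomputable def Fl (x : ℝ) : ℝ := ∫ t in (0:ℝ)..x, lfn t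

lemma lfn_int (a b : ℝ) (ha : a ∈ Set.Icc (0:ℝ) 1) (hb : b ∈ Set.Icc (0:ℝ) 1) :
    IntervalIntegrable lfn volume a b := by
  apply lfn_int01.mono_set
  rw [Set.uIcc_of_le (by norm_num : (0:ℝ) ≤ 1)]
  exact Set.uIcc_subset_Icc ha hb

lemma Fl_strictMono : StrictMonoOn Fl (Set.Icc 0 1) := by
  intro a ha b hb hab
  have hint : IntervalIntegrable lfn volume a b := lfn_int a b ha hb
  have hpos : 0 < ∫ t in a..b, lfn t := by
    apply intervalIntegral.intervalIntegral_pos_of_pos_on hint _ hab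
    intro x hx
    have hx0 : 0 ≤ x := le_trans ha.1 hx.1.le
    have hx1 : x < 1 := lt_of_lt_of_le hx.2 hb.2
    have : x ^ 4 < 1 := pow_lt_one₀ hx0 hx1 (by norm_num)
    unfold lfn
    exact div_pos one_pos (Real.sqrt_pos.2 (by linarith))
  have := intervalIntegral.integral_add_adjacent_intervals
    (lfn_int 0 a (by norm_num) ha) hint
  unfold Fl
  linarith

noncomputable def phl (x : ℝ) : ℝ := Real.sqrt ((1 - x ^ 2) / (1 + x ^ 2))

lemma phl_mem (x : ℝ) (hx : x ∈ Set.Icc (0:ℝ) 1) : phl x ∈ Set.Icc (0:ℝ) 1 := by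
  obtain ⟨h0, h1⟩ := hx
  constructor
  · exact Real.sqrt_nonneg _
  · apply Real.sqrt_le_one.2
    rw [div_le_one (by positivity)]
    nlinarith

lemma Fl_hasDeriv (y : ℝ) (hy : y ∈ Set.Ioo (0:ℝ) 1) : HasDerivAt Fl (lfn y) y := by
  apply intervalIntegral.integral_hasDerivAt_right
    (lfn_int 0 y (by norm_num) ⟨hy.1.le, hy.2.le⟩)
    (lfn_meas.stronglyMeasurable.stronglyMeasurableAtFilter)
  have hpos : 0 < 1 - y ^ 4 := by
    have := pow_lt_one₀ hy.1.le hy.2 (by norm_num : 4 ≠ 0)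
    linarith
  have : ContinuousAt (fun t : ℝ => Real.sqrt (1 - t ^ 4)) y := by fun_prop
  exact continuousAt_const.div this (by positivity)

lemma H_hasDeriv (x : ℝ) (hx : x ∈ Set.Ioo (0:ℝ) 1) :
    HasDerivAt (fun x => Fl x + Fl (phl x)) 0 x := by
  obtain ⟨hx0, hx1⟩ := hx
  have ha : (0:ℝ) < 1 + x ^ 2 := by positivity
  have hb : (0:ℝ) < 1 - x ^ 2 := by nlinarith
  have hu : HasDerivAt (fun x : ℝ => (1 - x ^ 2) / (1 + x ^ 2))
      ((-4 * x) / (1 + x ^ 2) ^ 2) x := by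
    have h1 : HasDerivAt (fun x : ℝ => 1 - x ^ 2) (-(2 * x)) x := by
      simpa using (hasDerivAt_pow 2 x).const_sub 1
    have h2 : HasDerivAt (fun x : ℝ => 1 + x ^ 2) (2 * x) x := by
      simpa using (hasDerivAt_pow 2 x).const_add 1
    have := h1.div h2 (by positivity)
    refine this.congr_deriv ?_
    symm
    ring
  have hune : (1 - x ^ 2) / (1 + x ^ 2) ≠ 0 := by positivity
  have hphi : HasDerivAt phl ((-4 * x) / (1 + x ^ 2) ^ 2 / (2 * phl x)) x := hu.sqrt hune
  have hmem : phl x ∈ Set.Ioo (0:ℝ) 1 := by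
    refine ⟨Real.sqrt_pos.2 (by positivity), ?_⟩
    calc phl x < Real.sqrt 1 :=
          Real.sqrt_lt_sqrt (by positivity) (by rw [div_lt_one ha]; nlinarith)
      _ = 1 := Real.sqrt_one
  have hcomp : HasDerivAt (fun x => Fl (phl x))
      (lfn (phl x) * ((-4 * x) / (1 + x ^ 2) ^ 2 / (2 * phl x))) x :=
    (Fl_hasDeriv (phl x) hmem).comp x hphi
  have hsum := (Fl_hasDeriv x ⟨hx0, hx1⟩).add hcomp
  refine hsum.congr_deriv ?_
  symm
  -- algebra: lfn x + lfn (phl x) * φ' = 0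
  have hs0 : 0 < phl x := hmem.1
  have hsq : phl x ^ 2 = (1 - x ^ 2) / (1 + x ^ 2) := Real.sq_sqrt (by positivity)
  have key1 : Real.sqrt (1 - phl x ^ 4) = 2 * x / (1 + x ^ 2) := by
    have : 1 - phl x ^ 4 = (2 * x / (1 + x ^ 2)) ^ 2 := by
      have : phl x ^ 4 = (phl x ^ 2) ^ 2 := by ring
      rw [this, hsq]
      field_simp
      ring
    rw [this, Real.sqrt_sq (by positivity)]
  have key2 : Real.sqrt (1 - x ^ 4) = (1 + x ^ 2) * phl x := by
    have : 1 - x ^ 4 = ((1 + x ^ 2) * phl x) ^ 2 := by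
      have h : ((1 + x ^ 2) * phl x) ^ 2 = (1 + x ^ 2) ^ 2 * phl x ^ 2 := by ring
      rw [h, hsq]
      field_simp
      ring
    rw [this, Real.sqrt_sq (by positivity)]
  unfold lfn
  rw [key1, key2]
  field_simp
  ring

lemma Fl_contOn : ContinuousOn Fl (Set.Icc 0 1) := by
  have h : IntegrableOn lfn (Set.uIcc 0 1) volume := by
    rw [Set.uIcc_of_le (by norm_num : (0:ℝ) ≤ 1)]
    exact (integrableOn_Icc_iff_integrableOn_Ioc (by simp)).2 lfn_int01.1
  have := intervalIntegral.continuousOn_primitive_interval h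
  rwa [Set.uIcc_of_le (by norm_num : (0:ℝ) ≤ 1)] at this

lemma phl_cont : Continuous phl := by
  apply Real.continuous_sqrt.comp
  exact Continuous.div (by fun_prop) (by fun_prop) (fun x => by positivity)

lemma H_const (x : ℝ) (hx : x ∈ Set.Icc (0:ℝ) 1) : Fl x + Fl (phl x) = Fl 1 := by
  have hphl1 : phl 1 = 0 := by simp [phl]
  have hphl0 : phl 0 = 1 := by simp [phl]
  have hFl0 : Fl 0 = 0 := intervalIntegral.integral_same
  rcases eq_or_lt_of_le hx.2 with h1 | h1
  · rw [h1, hphl1, hFl0]; ring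
  rcases eq_or_lt_of_le hx.1 with h0 | h0
  · rw [← h0, hphl0, hFl0]; ring
  -- x ∈ Ioo 0 1 : MVT on [x,1]
  have hcont : ContinuousOn (fun y => Fl y + Fl (phl y)) (Set.Icc x 1) := by
    apply ContinuousOn.add
    · exact Fl_contOn.mono (Set.Icc_subset_Icc h0.le le_rfl)
    · apply Fl_contOn.comp (phl_cont.continuousOn)
      intro y hy
      exact phl_mem y ⟨le_trans h0.le hy.1, hy.2⟩
  obtain ⟨c, hc, hceq⟩ := exists_hasDerivAt_eq_slope (fun y => Fl y + Fl (phl y))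
    (fun _ => 0) h1 hcont
    (fun y hy => H_hasDeriv y ⟨lt_trans h0 hy.1, hy.2⟩)
  have h10 : (1:ℝ) - x ≠ 0 := by linarith
  have := hceq.symm
  rw [div_eq_zero_iff] at this
  rcases this with h | h
  · rw [hphl1, hFl0] at h
    linarith
  · exact absurd h h10



theorem leaf_pythagorean (π₂ : ℝ) (hπ : π₂ = 2 * ∫ t in (0:ℝ)..1, 1 / Real.sqrt (1 - t ^ 4))
    (sleaf : ℝ → ℝ)
    (hs : ∀ l ∈ Set.Icc 0 (π₂ / 2), sleaf l ∈ Set.Icc (0:ℝ) 1 ∧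
      (∫ t in (0:ℝ)..(sleaf l), 1 / Real.sqrt (1 - t ^ 4)) = l)
    (cleaf : ℝ → ℝ)
    (hc : ∀ l ∈ Set.Icc 0 (π₂ / 2), cleaf l ∈ Set.Icc (0:ℝ) 1 ∧
      (∫ t in (cleaf l)..1, 1 / Real.sqrt (1 - t ^ 4)) = l) :
    ∀ l ∈ Set.Icc 0 (π₂ / 2),
      (sleaf l) ^ 2 + (cleaf l) ^ 2 + (sleaf l) ^ 2 * (cleaf l) ^ 2 = 1 := by
  intro l hl
  obtain ⟨hsmem, hsl⟩ := hs l hl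
  obtain ⟨hcmem, hcl⟩ := hc l hl
  set s := sleaf l with hsdef
  set c := cleaf l with hcdef
  have hFs : Fl s = l := hsl
  have hGc : (∫ t in c..(1:ℝ), lfn t) = l := hcl
  have hadj : Fl c + (∫ t in c..(1:ℝ), lfn t) = Fl 1 :=
    intervalIntegral.integral_add_adjacent_intervals
      (lfn_int 0 c (by norm_num) hcmem) (lfn_int c 1 hcmem (by norm_num))
  have hFc : Fl c = Fl 1 - l := by rw [← hadj, hGc]; ring
  have hFphs : Fl (phl s) = Fl 1 - l := by
    have := H_const s hsmem
    rw [hFs] at this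
    linarith
  have heq : phl s = c :=
    Fl_strictMono.injOn (phl_mem s hsmem) hcmem (by rw [hFphs, hFc])
  have hc2 : c ^ 2 = (1 - s ^ 2) / (1 + s ^ 2) := by
    rw [← heq]
    exact Real.sq_sqrt (div_nonneg
      (by nlinarith [hsmem.1, hsmem.2]) (by positivity))
  have hne : (1:ℝ) + s ^ 2 ≠ 0 := by positivity
  rw [hc2]
  field_simp
  ring
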